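/- If r is a maximal positive solution of r r'' = r² + 2(r')² + r²(r² + (r')²) on (a,b) attaining its minimum value r₀ = r(θ₀), then b − a < π/(1 + r₀²). -/

import Mathlib

/-- `r` (with derivatives `r'`, `r''`) is a positive solution of the ODE
`r r'' = r² + 2 r'² + r² (r² + r'²)` on the open interval `(a,b)`. -/
def SolOn (r r' r'' : ℝ → ℝ) (a b : ℝ) : Prop :=
  ∀ θ ∈ Set.Ioo a b, 0 < r θ ∧ HasDerivAt r (r' θ) θ ∧ HasDerivAt r' (r'' θ) θ ∧
    r θ * r'' θ = (r θ)^2 + 2 * (r' θ)^2 + (r θ)^2 * ((r θ)^2 + (r' θ)^2)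

/-- The solution on `(a,b)` is maximal: it admits no extension to a strictly
larger open interval. -/
def MaximalSolOn (r r' r'' : ℝ → ℝ) (a b : ℝ) : Prop :=
  SolOn r r' r'' a b ∧
    ∀ (a' b' : ℝ) (ρ ρ' ρ'' : ℝ → ℝ), a' ≤ a → b ≤ b' →
      (∀ θ ∈ Set.Ioo a b, ρ θ = r θ) → SolOn ρ ρ' ρ'' a' b' → a' = a ∧ b' = b

/-- If a maximal positive solution of `r r'' = r² + 2 r'² + r² (r² + r'²)` on `(a,b)`
attains its minimum `r₀ = r θ₀`, then `b - a < π / (1 + r₀²)`. -/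
theorem stmt9 (a b : ℝ) (hab : a < b) (r r' r'' : ℝ → ℝ)
    (hmax : MaximalSolOn r r' r'' a b)
    (θ₀ : ℝ) (hθ₀ : θ₀ ∈ Set.Ioo a b)
    (hmin : ∀ θ ∈ Set.Ioo a b, r θ₀ ≤ r θ) :
    b - a < Real.pi / (1 + (r θ₀)^2) := by
  obtain ⟨hsol, -⟩ := hmax
  have hpos : ∀ θ ∈ Set.Ioo a b, 0 < r θ := fun θ hθ => (hsol θ hθ).1
  have hd : ∀ θ ∈ Set.Ioo a b, HasDerivAt r (r' θ) θ := fun θ hθ => (hsol θ hθ).2.1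
  have hd' : ∀ θ ∈ Set.Ioo a b, HasDerivAt r' (r'' θ) θ := fun θ hθ => (hsol θ hθ).2.2.1
  have hode : ∀ θ ∈ Set.Ioo a b,
      r θ * r'' θ = (r θ)^2 + 2 * (r' θ)^2 + (r θ)^2 * ((r θ)^2 + (r' θ)^2) :=
    fun θ hθ => (hsol θ hθ).2.2.2
  set r₀ := r θ₀ with hr₀def
  have hr₀ : 0 < r₀ := hpos θ₀ hθ₀
  set c : ℝ := 1 + r₀^2 with hcdef
  have hc : 0 < c := by positivity
  have hpi := Real.pi_pos
  set w : ℝ → ℝ := fun θ => Real.arctan (r' θ / r θ) with hwdef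
  -- derivative of w
  have hw : ∀ θ ∈ Set.Ioo a b, HasDerivAt w (1 + (r θ)^2) θ := by
    intro θ hθ
    have hr := hpos θ hθ
    have hv : HasDerivAt (fun t => r' t / r t)
        ((r'' θ * r θ - r' θ * r' θ) / (r θ)^2) θ := (hd' θ hθ).div (hd θ hθ) hr.ne'
    have harc := (Real.hasDerivAt_arctan (r' θ / r θ)).comp θ hv
    refine (harc.congr_deriv ?_ : HasDerivAt w _ θ)
    have h3 := hode θ hθ
    have hne : (1:ℝ) + (r' θ / r θ)^2 ≠ 0 := by positivity
    field_simp
    nlinarith [sq_nonneg (r θ), sq_nonneg (r' θ), h3, sq_nonneg (r θ * r' θ)]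
  -- r' θ₀ = 0
  have hlocmin : IsLocalMin r θ₀ :=
    Filter.eventually_of_mem (isOpen_Ioo.mem_nhds hθ₀) hmin
  have hr'0 : r' θ₀ = 0 := hlocmin.hasDerivAt_eq_zero (hd θ₀ hθ₀)
  have hw0 : w θ₀ = 0 := by simp [hwdef, hr'0]
  clear_value r₀ c w
  -- key monotonicity lemma
  have key : ∀ (k θ₁ θ₂ : ℝ), θ₁ ≤ θ₂ → Set.Icc θ₁ θ₂ ⊆ Set.Ioo a b →
      (∀ θ ∈ Set.Icc θ₁ θ₂, k ≤ 1 + (r θ)^2) → k * (θ₂ - θ₁) ≤ w θ₂ - w θ₁ := by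
    intro k θ₁ θ₂ h12 hsub hk
    set g : ℝ → ℝ := fun t => w t - k * t with hgdef
    have hg : ∀ θ ∈ Set.Icc θ₁ θ₂, HasDerivAt g (1 + (r θ)^2 - k) θ := by
      intro θ hθ
      exact (hw θ (hsub hθ)).sub (by simpa using (hasDerivAt_id θ).const_mul k)
    have hmono : MonotoneOn g (Set.Icc θ₁ θ₂) := by
      apply monotoneOn_of_hasDerivWithinAt_nonneg (convex_Icc θ₁ θ₂)
        (f' := fun θ => 1 + (r θ)^2 - k)
      · exact fun θ hθ => (hg θ hθ).continuousAt.continuousWithinAt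
      · intro θ hθ
        exact (hg θ (interior_subset hθ)).hasDerivWithinAt
      · intro θ hθ
        have := hk θ (interior_subset hθ)
        linarith
    have := hmono (Set.left_mem_Icc.2 h12) (Set.right_mem_Icc.2 h12) h12
    simp only [hgdef] at this
    linarith
  have hwlt : ∀ θ : ℝ, w θ < Real.pi / 2 := fun θ => by
    rw [hwdef]; exact Real.arctan_lt_pi_div_two _
  have hwgt : ∀ θ : ℝ, -(Real.pi / 2) < w θ := fun θ => by
    rw [hwdef]; exact Real.neg_pi_div_two_lt_arctan _
  have hrsq : ∀ θ ∈ Set.Ioo a b, c ≤ 1 + (r θ)^2 := by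
    intro θ hθ
    have h1 := hmin θ hθ
    have : r₀^2 ≤ (r θ)^2 := by nlinarith
    simp only [hcdef]; linarith
  -- a point to the right of θ₀ with r > r₀
  have hex : ∃ θ₁ ∈ Set.Ioo θ₀ b, r₀ < r θ₁ := by
    by_contra h
    push_neg at h
    have hconst : ∀ θ ∈ Set.Ioo θ₀ b, r θ = r₀ := by
      intro θ hθ
      have hθab : θ ∈ Set.Ioo a b := ⟨lt_trans hθ₀.1 hθ.1, hθ.2⟩
      exact le_antisymm (h θ hθ) (hmin θ hθab)
    have hθsmem : (θ₀ + b) / 2 ∈ Set.Ioo θ₀ b :=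
      ⟨by linarith [hθ₀.2], by linarith [hθ₀.2]⟩
    have hθsab : (θ₀ + b) / 2 ∈ Set.Ioo a b := ⟨lt_trans hθ₀.1 hθsmem.1, hθsmem.2⟩
    have hr'z : ∀ θ ∈ Set.Ioo θ₀ b, r' θ = 0 := by
      intro θ hθ
      have hθab : θ ∈ Set.Ioo a b := ⟨lt_trans hθ₀.1 hθ.1, hθ.2⟩
      have heq : r =ᶠ[nhds θ] (fun _ => r₀) :=
        Filter.eventually_of_mem (isOpen_Ioo.mem_nhds hθ) hconst
      have h1 : HasDerivAt (fun _ : ℝ => r₀) (r' θ) θ :=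
        (Filter.EventuallyEq.hasDerivAt_iff heq).1 (hd θ hθab)
      exact h1.unique (hasDerivAt_const θ r₀)
    have heq' : r' =ᶠ[nhds ((θ₀ + b) / 2)] (fun _ => (0:ℝ)) :=
      Filter.eventually_of_mem (isOpen_Ioo.mem_nhds hθsmem) hr'z
    have hrs'' : r'' ((θ₀ + b) / 2) = 0 := by
      have h1 : HasDerivAt (fun _ : ℝ => (0:ℝ)) (r'' ((θ₀ + b) / 2)) ((θ₀ + b) / 2) :=
        (Filter.EventuallyEq.hasDerivAt_iff heq').1 (hd' _ hθsab)
      exact h1.unique (hasDerivAt_const _ 0)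
    have hode' := hode _ hθsab
    rw [hconst _ hθsmem, hr'z _ hθsmem, hrs''] at hode'
    nlinarith [hr₀]
  obtain ⟨θ₁, hθ₁, hrθ₁⟩ := hex
  -- a closed interval [θ₁, θ₂] on which r > m > r₀
  set m : ℝ := (r θ₁ + r₀) / 2 with hm
  have hmr₀ : r₀ < m := by simp only [hm]; linarith
  have hmpos : 0 < m := lt_trans hr₀ hmr₀
  have hθ₁ab : θ₁ ∈ Set.Ioo a b := ⟨lt_trans hθ₀.1 hθ₁.1, hθ₁.2⟩
  have hcont : ContinuousAt r θ₁ := (hd θ₁ hθ₁ab).continuousAt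
  have hev : ∀ᶠ x in nhds θ₁, m < r x :=
    hcont.eventually (eventually_gt_nhds (by simp only [hm]; linarith))
  obtain ⟨V, hVU, hVopen, hθ₁V⟩ := mem_nhds_iff.1 hev
  obtain ⟨δ, hδ, hball⟩ := Metric.isOpen_iff.1 hVopen θ₁ hθ₁V
  set θ₂ : ℝ := min (θ₁ + δ/2) ((θ₁ + b)/2) with hθ₂def
  have hθ₁₂ : θ₁ < θ₂ := lt_min (by linarith) (by linarith [hθ₁.2])
  have hθ₂b : θ₂ < b := lt_of_le_of_lt (min_le_right _ _) (by linarith [hθ₁.2])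
  have hIccsub : Set.Icc θ₁ θ₂ ⊆ Set.Ioo a b := fun x hx =>
    ⟨lt_of_lt_of_le hθ₁ab.1 hx.1, lt_of_le_of_lt hx.2 hθ₂b⟩
  have hrm : ∀ θ ∈ Set.Icc θ₁ θ₂, m < r θ := by
    intro x hx
    apply hVU
    apply hball
    have h2 : θ₂ ≤ θ₁ + δ/2 := min_le_left _ _
    have h1 : x - θ₁ < δ := by linarith [hx.2]
    have h0 : θ₁ ≤ x := hx.1
    simp only [Metric.mem_ball, Real.dist_eq, abs_lt]
    constructor <;> linarith
  clear_value m θ₂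
  set ε : ℝ := ((1 + m^2) - c) * (θ₂ - θ₁) with hε
  have hεpos : 0 < ε := by
    rw [hε]
    apply mul_pos
    · have : r₀^2 < m^2 := by nlinarith
      simp only [hcdef]; linarith
    · linarith
  -- left side: θ₀ - π/2/c ≤ a
  clear_value ε
  have hπc : 0 < Real.pi / 2 / c := by positivity
  have hleft : θ₀ - Real.pi / 2 / c ≤ a := by
    by_contra h
    push_neg at h
    have hθa : a < (a + (θ₀ - Real.pi / 2 / c)) / 2 := by linarith
    have hθX : (a + (θ₀ - Real.pi / 2 / c)) / 2 < θ₀ - Real.pi / 2 / c := by linarith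
    have hθmem : (a + (θ₀ - Real.pi / 2 / c)) / 2 ∈ Set.Ioo a b :=
      ⟨hθa, by linarith [hθ₀.2]⟩
    have hsub : Set.Icc ((a + (θ₀ - Real.pi / 2 / c)) / 2) θ₀ ⊆ Set.Ioo a b := fun x hx =>
      ⟨lt_of_lt_of_le hθa hx.1, lt_of_le_of_lt hx.2 hθ₀.2⟩
    have hk := key c _ θ₀ (by linarith) hsub (fun x hx => hrsq x (hsub hx))
    rw [hw0] at hk
    have hwθ := hwgt ((a + (θ₀ - Real.pi / 2 / c)) / 2)
    -- c * (θ₀ - θ) < π/2 ⇒ θ₀ - θ < π/2/c ⇒ θ > θ₀ - π/2/c, contradiction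
    have h1 : c * (θ₀ - (a + (θ₀ - Real.pi / 2 / c)) / 2) < Real.pi / 2 := by linarith
    have h2 : θ₀ - (a + (θ₀ - Real.pi / 2 / c)) / 2 < Real.pi / 2 / c := by
      rw [lt_div_iff₀ hc]
      linarith [mul_comm c (θ₀ - (a + (θ₀ - Real.pi / 2 / c)) / 2)]
    linarith
  -- right side: b ≤ θ₀ + (π/2 - ε)/c
  have hright : b ≤ θ₀ + (Real.pi / 2 - ε) / c := by
    by_contra h
    push_neg at h
    set Y : ℝ := θ₀ + (Real.pi / 2 - ε) / c with hY
    set θ : ℝ := max ((θ₂ + b)/2) ((Y + b)/2) with hθdef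
    have hθmax : θ = max ((θ₂ + b)/2) ((Y + b)/2) := hθdef
    clear_value Y θ
    have hb1 : (θ₂ + b)/2 < b := by linarith
    have hb2 : (Y + b)/2 < b := by linarith
    have hθgtθ₂ : θ₂ < θ := by
      rw [hθmax]; exact lt_of_lt_of_le (by linarith) (le_max_left _ _)
    have hθltb : θ < b := by rw [hθmax]; exact max_lt hb1 hb2
    have hθgtY : Y < θ := by
      rw [hθmax]; exact lt_of_lt_of_le (by linarith) (le_max_right _ _)
    have hθmem : θ ∈ Set.Ioo a b :=
      ⟨by linarith [hθ₀.1, hθ₁.1, hθ₁₂, hθgtθ₂], hθltb⟩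
    -- three applications of key
    have hsub1 : Set.Icc θ₀ θ₁ ⊆ Set.Ioo a b := fun x hx =>
      ⟨lt_of_lt_of_le hθ₀.1 hx.1, lt_of_le_of_lt hx.2 hθ₁.2⟩
    have hk1 := key c θ₀ θ₁ (le_of_lt hθ₁.1) hsub1 (fun x hx => hrsq x (hsub1 hx))
    have hk2 := key (1 + m^2) θ₁ θ₂ (le_of_lt hθ₁₂) hIccsub (by
      intro x hx
      have := hrm x hx
      nlinarith)
    have hsub3 : Set.Icc θ₂ θ ⊆ Set.Ioo a b := fun x hx =>
      ⟨by linarith [hx.1, hθ₀.1, hθ₁.1, hθ₁₂], lt_of_le_of_lt hx.2 hθltb⟩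
    have hk3 := key c θ₂ θ (le_of_lt hθgtθ₂) hsub3 (fun x hx => hrsq x (hsub3 hx))
    rw [hw0] at hk1
    have hwθ := hwlt θ
    -- sum: c*(θ - θ₀) + ε ≤ w θ < π/2
    have hexp : c * (θ - θ₀) + ε = c * (θ₁ - θ₀) + (1 + m^2) * (θ₂ - θ₁) + c * (θ - θ₂) := by
      rw [hε]; ring
    have hsum : c * (θ - θ₀) + ε ≤ w θ := by linarith [hk1, hk2, hk3]
    have h1 : c * (θ - θ₀) < Real.pi / 2 - ε := by linarith
    have h2 : θ - θ₀ < (Real.pi / 2 - ε) / c := by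
      rw [lt_div_iff₀ hc]; linarith [mul_comm c (θ - θ₀)]
    -- so θ < Y, contradiction with Y < θ
    have : θ < Y := by simp only [hY]; linarith
    linarith
  -- conclude
  have hfinal : b - a ≤ Real.pi / c - ε / c := by
    have h1 : (Real.pi / 2 - ε) / c = Real.pi / 2 / c - ε / c := by ring
    have h2 : Real.pi / 2 / c + Real.pi / 2 / c = Real.pi / c := by ring
    linarith
  have hεc : 0 < ε / c := div_pos hεpos hc
  calc b - a ≤ Real.pi / c - ε / c := hfinal
    _ < Real.pi / c := by linarith
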